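/- Let μ > 0 and p > 0. Let f : [0,μ] → ℝ be continuous, twice continuously differentiable on [0,μ), and satisfy f''(x) = ( 2/(x²−μ²) + p² ) f(x) for all x ∈ [0,μ), with f(0) = 0 and f'(0) > 0 (one-sided derivative at 0). Then f(x) > 0 for all 0 < x ≤ μ, and moreover f(x) ≥ 0.13 · f'(0) · sinh(px)/p for all 0 ≤ x ≤ μ. -/

import Mathlib

open Set Filter Topology

private noncomputable def phiW (μ x : ℝ) : ℝ := 1/3 + 2/3 * Real.sqrt (μ^2 - x^2) / μ
private noncomputable def phiW1 (μ x : ℝ) : ℝ := -(2*x)/(3*μ*Real.sqrt (μ^2 - x^2))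
private noncomputable def phiF (μ p x : ℝ) : ℝ := Real.sinh (p*x)/p * phiW μ x
private noncomputable def phiF1 (μ p x : ℝ) : ℝ :=
  Real.cosh (p*x) * phiW μ x + Real.sinh (p*x)/p * phiW1 μ x
private noncomputable def phiF2 (μ p x : ℝ) : ℝ :=
  p^2 * phiF μ p x + 2 * Real.cosh (p*x) * phiW1 μ x
    + Real.sinh (p*x)/p * (-(2*μ)/(3*(Real.sqrt (μ^2 - x^2))^3))

private theorem sinh_le_mul_cosh {x : ℝ} (h : 0 ≤ x) : Real.sinh x ≤ x * Real.cosh x := by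
  have h1 : ∀ t : ℝ, HasDerivAt (fun t => t * Real.cosh t - Real.sinh t) (t * Real.sinh t) t := by
    intro t
    exact (((hasDerivAt_id t).mul (Real.hasDerivAt_cosh t)).sub (Real.hasDerivAt_sinh t)).congr_deriv
      (by simp only [id_eq, one_mul]; ring)
  have hmono : Monotone (fun t => t * Real.cosh t - Real.sinh t) := by
    apply monotone_of_deriv_nonneg
    · exact fun t => (h1 t).differentiableAt
    · intro t
      rw [(h1 t).deriv]
      rcases le_or_gt 0 t with ht | ht
      · positivity
      · have : Real.sinh t ≤ 0 := by
          rw [← Real.sinh_zero]; exact (Real.sinh_lt_sinh.mpr ht).le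
        nlinarith
  have := hmono h
  simp only [Real.sinh_zero, Real.cosh_zero, zero_mul, sub_zero] at this
  linarith

private lemma hasDerivAt_sqrtsub (μ x : ℝ) (hx : x^2 < μ^2) :
    HasDerivAt (fun y => Real.sqrt (μ^2 - y^2)) (-x / Real.sqrt (μ^2 - x^2)) x := by
  have hne : μ^2 - x^2 ≠ 0 := by nlinarith
  have hin : HasDerivAt (fun y : ℝ => μ^2 - y^2) (-(2*x)) x := by
    simpa using ((hasDerivAt_pow 2 x).const_sub (μ^2))
  have := (Real.hasDerivAt_sqrt hne).comp x hin
  refine this.congr_deriv (Eq.symm ?_)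
  have hpos : 0 < Real.sqrt (μ^2 - x^2) := Real.sqrt_pos.mpr (by nlinarith)
  field_simp

private lemma hasDerivAt_phiW (μ x : ℝ) (hx : x^2 < μ^2) :
    HasDerivAt (phiW μ) (phiW1 μ x) x := by
  have h := ((hasDerivAt_sqrtsub μ x hx).const_mul (2/3 : ℝ)).div_const μ
  have := h.const_add (1/3 : ℝ)
  refine this.congr_deriv (Eq.symm ?_)
  unfold phiW1
  have hpos : 0 < Real.sqrt (μ^2 - x^2) := Real.sqrt_pos.mpr (by nlinarith)
  field_simp

private lemma hasDerivAt_phiW1 (μ x : ℝ) (hμ : 0 < μ) (hx : x^2 < μ^2) :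
    HasDerivAt (phiW1 μ) (-(2*μ)/(3*(Real.sqrt (μ^2 - x^2))^3)) x := by
  have hpos : 0 < Real.sqrt (μ^2 - x^2) := Real.sqrt_pos.mpr (by nlinarith)
  have hnum : HasDerivAt (fun y : ℝ => -(2*y)) (-2 : ℝ) x := by
    simpa using (hasDerivAt_id x).const_mul (-2 : ℝ)
  have hden : HasDerivAt (fun y => 3*μ*Real.sqrt (μ^2 - y^2))
      (3*μ*(-x / Real.sqrt (μ^2 - x^2))) x := (hasDerivAt_sqrtsub μ x hx).const_mul _
  have hdenne : 3*μ*Real.sqrt (μ^2 - x^2) ≠ 0 := by positivity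
  have := hnum.div hden hdenne
  refine this.congr_deriv (Eq.symm ?_)
  have hsq : (Real.sqrt (μ^2 - x^2))^2 = μ^2 - x^2 := Real.sq_sqrt (by nlinarith)
  field_simp
  linear_combination hsq

private lemma hasDerivAt_sinhp (p x : ℝ) (hp : p ≠ 0) :
    HasDerivAt (fun y => Real.sinh (p*y)/p) (Real.cosh (p*x)) x := by
  have h : HasDerivAt (fun y : ℝ => Real.sinh (p*y)) (Real.cosh (p*x) * p) x :=
    (Real.hasDerivAt_sinh (p*x)).comp x (by simpa using (hasDerivAt_id x).const_mul p)
  have := h.div_const p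
  refine this.congr_deriv (Eq.symm ?_)
  field_simp

private lemma hasDerivAt_phiF (μ p x : ℝ) (hμ : 0 < μ) (hp : 0 < p) (hx : x^2 < μ^2) :
    HasDerivAt (phiF μ p) (phiF1 μ p x) x :=
  (hasDerivAt_sinhp p x hp.ne').mul (hasDerivAt_phiW μ x hx)

private lemma hasDerivAt_phiF1 (μ p x : ℝ) (hμ : 0 < μ) (hp : 0 < p) (hx : x^2 < μ^2) :
    HasDerivAt (phiF1 μ p) (phiF2 μ p x) x := by
  have h1 : HasDerivAt (fun y => Real.cosh (p*y)) (Real.sinh (p*x) * p) x :=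
    (Real.hasDerivAt_cosh (p*x)).comp x (by simpa using (hasDerivAt_id x).const_mul p)
  have hA := h1.mul (hasDerivAt_phiW μ x hx)
  have hB := (hasDerivAt_sinhp p x hp.ne').mul (hasDerivAt_phiW1 μ x hμ hx)
  have := hA.add hB
  refine this.congr_deriv (Eq.symm ?_)
  unfold phiF2 phiF
  field_simp
  ring

private lemma phiF_lb (μ p x : ℝ) (hμ : 0 < μ) (hp : 0 < p) (hx : 0 ≤ x) :
    1/3 * (Real.sinh (p*x)/p) ≤ phiF μ p x := by
  have hS : 0 ≤ Real.sinh (p*x)/p := by positivity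
  have hw : 1/3 ≤ phiW μ x := by
    unfold phiW
    have h1 : 0 ≤ Real.sqrt (μ^2 - x^2) := Real.sqrt_nonneg _
    have h2 : 0 ≤ 2/3 * Real.sqrt (μ^2 - x^2) / μ := by positivity
    linarith
  calc 1/3 * (Real.sinh (p*x)/p) ≤ phiW μ x * (Real.sinh (p*x)/p) :=
        mul_le_mul_of_nonneg_right hw hS
    _ = phiF μ p x := by unfold phiF; ring

private lemma phiF_pos (μ p x : ℝ) (hμ : 0 < μ) (hp : 0 < p) (hx : 0 < x) : 0 < phiF μ p x := by
  have h1 := phiF_lb μ p x hμ hp hx.le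
  have h2 : 0 < Real.sinh (p*x) := by
    rw [← Real.sinh_zero]; exact Real.sinh_lt_sinh.mpr (by positivity)
  have : (0:ℝ) < 1/3 * (Real.sinh (p*x)/p) := by positivity
  linarith

private lemma phiF_zero (μ p : ℝ) : phiF μ p 0 = 0 := by simp [phiF]

private lemma phiF1_zero (μ p : ℝ) (hμ : 0 < μ) : phiF1 μ p 0 = 1 := by
  simp [phiF1, phiW, Real.sqrt_sq hμ.le]
  field_simp
  ring

private lemma phiF_cont (μ p : ℝ) : Continuous (phiF μ p) := by
  unfold phiF phiW
  fun_prop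

private lemma phikey (μ p x r S C : ℝ) (hμ : 0 < μ) (hr : 0 < r) (hrμ : r ≤ μ)
    (hS : 0 ≤ S) (hC : 0 < C) (hxC : S ≤ x*C) :
    p^2*(S*(1/3+2/3*r/μ)) + 2*C*(-(2*x)/(3*μ*r)) + S*(-(2*μ)/(3*r^3))
      ≤ (-2/r^2 + p^2)*(S*(1/3+2/3*r/μ)) := by
  rw [← sub_nonneg]
  have expand : (-2/r^2 + p^2)*(S*(1/3+2/3*r/μ))
      - (p^2*(S*(1/3+2/3*r/μ)) + 2*C*(-(2*x)/(3*μ*r)) + S*(-(2*μ)/(3*r^3)))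
      = (4*x*C*r^2 + 2*μ^2*S - 2*S*μ*r - 4*S*r^2)/(3*μ*r^3) := by
    field_simp
    ring
  rw [expand]
  apply div_nonneg _ (by positivity)
  have h1 : S*r ≤ μ*S := by nlinarith
  have h2 : S*r^2 ≤ x*C*r^2 := by nlinarith
  nlinarith

private lemma phiF2_le (μ p x : ℝ) (hμ : 0 < μ) (hp : 0 < p) (hx : 0 ≤ x) (hxμ : x < μ) :
    phiF2 μ p x ≤ (2/(x^2 - μ^2) + p^2) * phiF μ p x := by
  have hd : 0 < μ^2 - x^2 := by nlinarith
  have hr : 0 < Real.sqrt (μ^2 - x^2) := Real.sqrt_pos.mpr hd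
  have hsq : (Real.sqrt (μ^2 - x^2))^2 = μ^2 - x^2 := Real.sq_sqrt hd.le
  have hrμ : Real.sqrt (μ^2 - x^2) ≤ μ := by
    calc Real.sqrt (μ^2 - x^2) ≤ Real.sqrt (μ^2) := Real.sqrt_le_sqrt (by nlinarith)
      _ = μ := Real.sqrt_sq hμ.le
  have hS : 0 ≤ Real.sinh (p*x)/p := by positivity
  have hC : 0 < Real.cosh (p*x) := Real.cosh_pos _
  have hxC : Real.sinh (p*x)/p ≤ x * Real.cosh (p*x) := by
    rw [div_le_iff₀ hp]
    calc Real.sinh (p*x) ≤ (p*x) * Real.cosh (p*x) := sinh_le_mul_cosh (by positivity)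
      _ = x * Real.cosh (p*x) * p := by ring
  have hne : x^2 - μ^2 ≠ 0 := by nlinarith
  have hq : 2/(x^2 - μ^2) = -2/(Real.sqrt (μ^2 - x^2))^2 := by
    rw [hsq]; field_simp; ring
  have key := phikey μ p x (Real.sqrt (μ^2 - x^2)) (Real.sinh (p*x)/p) (Real.cosh (p*x))
    hμ hr hrμ hS hC hxC
  unfold phiF2 phiF phiW phiW1
  rw [hq]
  exact key

/-- Positivity up to the singular point for the left ODE
`f'' = (2/(x²−μ²) + p²) f` on `[0,μ)` with `f(0)=0`, `f'(0)>0`: then `f > 0` on `(0,μ]`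
and `f(x) ≥ 0.13 · f'(0) · sinh(px)/p` on `[0,μ]`. -/
theorem statement4 (μ p : ℝ) (hμ : 0 < μ) (hp : 0 < p) (f : ℝ → ℝ)
    (hfc : ContinuousOn f (Set.Icc 0 μ))
    (hf2 : ContDiffOn ℝ 2 f (Set.Ico 0 μ))
    (hode : ∀ x ∈ Set.Ico (0:ℝ) μ,
      iteratedDerivWithin 2 f (Set.Ico 0 μ) x = (2 / (x ^ 2 - μ ^ 2) + p ^ 2) * f x)
    (hf0 : f 0 = 0) (hf'0 : 0 < derivWithin f (Set.Ico 0 μ) 0) :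
    (∀ x, 0 < x → x ≤ μ → 0 < f x) ∧
    (∀ x ∈ Set.Icc (0:ℝ) μ,
      0.13 * derivWithin f (Set.Ico 0 μ) 0 * (Real.sinh (p * x) / p) ≤ f x) := by
  set s : Set ℝ := Set.Ico 0 μ with hs_def
  set F1 : ℝ → ℝ := derivWithin f s with hF1_def
  set c : ℝ := F1 0 with hc_def
  have husd : UniqueDiffOn ℝ s := uniqueDiffOn_Ico 0 μ
  have hf1d : ContDiffOn ℝ 1 F1 s := hf2.derivWithin husd (by norm_num)
  have hF1cont : ContinuousOn F1 s := hf1d.continuousOn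
  have hfd : DifferentiableOn ℝ f s := hf2.differentiableOn (by norm_num)
  have hF1d : DifferentiableOn ℝ F1 s := hf1d.differentiableOn (by norm_num)
  have hmem : ∀ x ∈ Set.Ioo (0:ℝ) μ, s ∈ 𝓝 x := fun x hx => Ico_mem_nhds hx.1 hx.2
  have hatf : ∀ x ∈ Set.Ioo (0:ℝ) μ, HasDerivAt f (F1 x) x := fun x hx =>
    ((hfd x (Ioo_subset_Ico_self hx)).hasDerivWithinAt).hasDerivAt (hmem x hx)
  have hode' : ∀ x ∈ s, derivWithin F1 s x = (2/(x^2 - μ^2) + p^2) * f x := by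
    intro x hx
    rw [← hode x hx]
    rw [show (2:ℕ) = 1 + 1 from rfl, iteratedDerivWithin_succ]
    rw [iteratedDerivWithin_one]
  have hatF1 : ∀ x ∈ Set.Ioo (0:ℝ) μ, HasDerivAt F1 ((2/(x^2 - μ^2) + p^2) * f x) x := by
    intro x hx
    have h := (hF1d x (Ioo_subset_Ico_self hx)).hasDerivWithinAt
    rw [hode' x (Ioo_subset_Ico_self hx)] at h
    exact h.hasDerivAt (hmem x hx)
  have hsqlt : ∀ x, 0 ≤ x → x < μ → x^2 < μ^2 := by intro x h0 h1; nlinarith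
  -- slope limits at 0
  have hslopef : Tendsto (fun a => f a / a) (𝓝[>] (0:ℝ)) (𝓝 c) := by
    have h := (hfd 0 ⟨le_refl 0, hμ⟩).hasDerivWithinAt
    rw [hasDerivWithinAt_iff_tendsto_slope] at h
    rw [show s \ {0} = Set.Ioo 0 μ from Set.Ico_diff_left] at h
    rw [nhdsWithin_Ioo_eq_nhdsGT hμ] at h
    refine h.congr' ?_
    filter_upwards [self_mem_nhdsWithin] with a ha
    rw [slope_def_field]
    simp [hf0]
  have hslopeφ : Tendsto (fun a => phiF μ p a / a) (𝓝[>] (0:ℝ)) (𝓝 1) := by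
    have h := (hasDerivAt_phiF μ p 0 hμ hp (by nlinarith)).hasDerivWithinAt (s := Set.Ioi 0)
    rw [hasDerivWithinAt_iff_tendsto_slope] at h
    rw [Set.diff_singleton_eq_self (by simp : (0:ℝ) ∉ Set.Ioi 0)] at h
    rw [phiF1_zero μ p hμ] at h
    refine h.congr' ?_
    filter_upwards [self_mem_nhdsWithin] with a ha
    rw [slope_def_field]
    simp [phiF_zero]
  have hRlim : Tendsto (fun a => f a / phiF μ p a) (𝓝[>] (0:ℝ)) (𝓝 c) := by
    have h := hslopef.div hslopeφ one_ne_zero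
    simp only [div_one] at h
    refine h.congr' ?_
    filter_upwards [self_mem_nhdsWithin] with a ha
    have ha' : (0:ℝ) < a := ha
    have hφ := phiF_pos μ p a hμ hp ha'
    show f a / a / (phiF μ p a / a) = f a / phiF μ p a
    field_simp
  -- the core comparison lemma
  have core : ∀ b, 0 < b → b < μ → (∀ y, 0 < y → y ≤ b → 0 ≤ f y) →
      ∀ x, 0 < x → x ≤ b → c * phiF μ p x ≤ f x := by
    intro b hb hbμ hfnn
    set W : ℝ → ℝ := fun y => F1 y * phiF μ p y - f y * phiF1 μ p y with hW_def
    have hWd : ∀ y ∈ Set.Ioo 0 b, HasDerivAt W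
        (f y * ((2/(y^2 - μ^2) + p^2) * phiF μ p y - phiF2 μ p y)) y := by
      intro y hy
      have hyI : y ∈ Set.Ioo 0 μ := ⟨hy.1, lt_trans hy.2 hbμ⟩
      have hy2 : y^2 < μ^2 := hsqlt y hy.1.le hyI.2
      have h := ((hatF1 y hyI).mul (hasDerivAt_phiF μ p y hμ hp hy2)).sub
        ((hatf y hyI).mul (hasDerivAt_phiF1 μ p y hμ hp hy2))
      refine h.congr_deriv (Eq.symm ?_)
      ring
    have hWc : ContinuousOn W (Set.Icc 0 b) := by
      have hsub : Set.Icc 0 b ⊆ s := Set.Icc_subset_Ico_right hbμ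
      have hsub2 : Set.Icc 0 b ⊆ Set.Icc 0 μ := Set.Icc_subset_Icc le_rfl hbμ.le
      have h1 : ContinuousOn (phiF1 μ p) (Set.Icc 0 b) := fun y hy =>
        ((hasDerivAt_phiF1 μ p y hμ hp (hsqlt y hy.1 (lt_of_le_of_lt hy.2 hbμ))).continuousAt).continuousWithinAt
      exact ((hF1cont.mono hsub).mul ((phiF_cont μ p).continuousOn)).sub
        ((hfc.mono hsub2).mul h1)
    have hWmono : MonotoneOn W (Set.Icc 0 b) := by
      apply monotoneOn_of_deriv_nonneg (convex_Icc 0 b) hWc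
      · intro y hy
        rw [interior_Icc] at hy
        exact (hWd y hy).differentiableAt.differentiableWithinAt
      · intro y hy
        rw [interior_Icc] at hy
        rw [(hWd y hy).deriv]
        exact mul_nonneg (hfnn y hy.1 hy.2.le)
          (sub_nonneg.mpr (phiF2_le μ p y hμ hp hy.1.le (lt_trans hy.2 hbμ)))
    have hW0 : W 0 = 0 := by rw [hW_def]; simp [phiF_zero, hf0]
    have hWnn : ∀ y ∈ Set.Icc 0 b, 0 ≤ W y := by
      intro y hy
      have := hWmono ⟨le_refl 0, hb.le⟩ hy hy.1
      rwa [hW0] at this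
    have hratio : ∀ a x, 0 < a → a ≤ x → x ≤ b → f a / phiF μ p a ≤ f x / phiF μ p x := by
      intro a x ha hax hxb
      have hxμ : x < μ := lt_of_le_of_lt hxb hbμ
      have hsub2 : Set.Icc a x ⊆ Set.Icc 0 μ :=
        Set.Icc_subset_Icc ha.le (le_trans hxb hbμ.le)
      have hmono : MonotoneOn (fun y => f y / phiF μ p y) (Set.Icc a x) := by
        apply monotoneOn_of_deriv_nonneg (convex_Icc a x)
        · exact (hfc.mono hsub2).div ((phiF_cont μ p).continuousOn)
            (fun y hy => (phiF_pos μ p y hμ hp (lt_of_lt_of_le ha hy.1)).ne')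
        · intro y hy
          rw [interior_Icc] at hy
          have hyI : y ∈ Set.Ioo 0 μ := ⟨lt_trans ha hy.1, lt_of_lt_of_le hy.2 (le_trans hxb hbμ.le)⟩
          have hy2 : y^2 < μ^2 := hsqlt y hyI.1.le hyI.2
          exact ((hatf y hyI).div (hasDerivAt_phiF μ p y hμ hp hy2)
            (phiF_pos μ p y hμ hp hyI.1).ne').differentiableAt.differentiableWithinAt
        · intro y hy
          rw [interior_Icc] at hy
          have hyI : y ∈ Set.Ioo 0 μ := ⟨lt_trans ha hy.1, lt_of_lt_of_le hy.2 (le_trans hxb hbμ.le)⟩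
          have hy2 : y^2 < μ^2 := hsqlt y hyI.1.le hyI.2
          have hφy := phiF_pos μ p y hμ hp hyI.1
          rw [show (fun y => f y / phiF μ p y) = f / phiF μ p from rfl, ((hatf y hyI).div (hasDerivAt_phiF μ p y hμ hp hy2) hφy.ne').deriv]
          apply div_nonneg _ (by positivity)
          exact hWnn y ⟨hyI.1.le, le_trans hy.2.le hxb⟩
      exact hmono ⟨le_refl a, hax⟩ ⟨hax, le_refl x⟩ hax
    intro x hx hxb
    have hxμ : x < μ := lt_of_le_of_lt hxb hbμ
    have hφx : 0 < phiF μ p x := phiF_pos μ p x hμ hp hx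
    have hle : c ≤ f x / phiF μ p x := by
      refine le_of_tendsto hRlim ?_
      filter_upwards [Ioc_mem_nhdsGT_of_mem (⟨le_refl 0, hx⟩ : (0:ℝ) ∈ Set.Ico 0 x)] with a ha
      exact hratio a x ha.1 ha.2 hxb
    rwa [le_div_iff₀ hφx] at hle
  -- limit at the endpoint μ
  have hmulim : (∀ x, 0 < x → x < μ → c * phiF μ p x ≤ f x) → c * phiF μ p μ ≤ f μ := by
    intro h
    have hne : (𝓝[Set.Ioo (0:ℝ) μ] μ).NeBot := by
      rw [nhdsWithin_Ioo_eq_nhdsLT hμ]; infer_instance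
    have h1 : Tendsto (fun x => c * phiF μ p x) (𝓝[Set.Ioo (0:ℝ) μ] μ) (𝓝 (c * phiF μ p μ)) :=
      ((continuous_const.mul (phiF_cont μ p)).tendsto μ).mono_left nhdsWithin_le_nhds
    have h2 : Tendsto f (𝓝[Set.Ioo (0:ℝ) μ] μ) (𝓝 (f μ)) :=
      (hfc μ ⟨hμ.le, le_refl μ⟩).mono_left (nhdsWithin_mono _ Set.Ioo_subset_Icc_self)
    refine le_of_tendsto_of_tendsto h1 h2 ?_
    filter_upwards [eventually_mem_nhdsWithin] with y hy
    exact h y hy.1 hy.2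
  -- eventual positivity near 0
  have hposnear : ∀ᶠ a in 𝓝[>] (0:ℝ), 0 < f a := by
    have h1 : ∀ᶠ a in 𝓝[>] (0:ℝ), 0 < f a / a := hslopef.eventually (eventually_gt_nhds hf'0)
    filter_upwards [h1, self_mem_nhdsWithin] with a ha1 ha2
    have ha2' : (0:ℝ) < a := ha2
    have heq : f a = f a / a * a := (div_mul_cancel₀ _ ha2'.ne').symm
    rw [heq]
    exact mul_pos ha1 ha2'
  obtain ⟨u, hu0, hu⟩ := mem_nhdsGT_iff_exists_Ioo_subset.mp hposnear
  -- master bound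
  have hmaster : ∀ x, 0 ≤ x → x ≤ μ → c * phiF μ p x ≤ f x := by
    have hnoneg : ∀ x, 0 < x → x ≤ μ → 0 < f x := by
      by_contra hcon
      push_neg at hcon
      obtain ⟨x₁, hx₁0, hx₁μ, hx₁f⟩ := hcon
      set δ : ℝ := min u μ with hδ_def
      have hδ0 : 0 < δ := lt_min hu0 hμ
      set A : Set ℝ := Set.Icc δ μ ∩ f ⁻¹' Set.Iic 0 with hA_def
      have hAclosed : IsClosed A :=
        (hfc.mono (Set.Icc_subset_Icc hδ0.le (le_refl μ))).preimage_isClosed_of_isClosed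
          isClosed_Icc isClosed_Iic
      have hmemA : ∀ y, 0 < y → y ≤ μ → f y ≤ 0 → y ∈ A := by
        intro y hy0 hyμ hyf
        refine ⟨⟨?_, hyμ⟩, hyf⟩
        by_contra hlt
        push_neg at hlt
        exact absurd hyf (not_le.mpr (hu ⟨hy0, lt_of_lt_of_le hlt (min_le_left u μ)⟩))
      have hAne : A.Nonempty := ⟨x₁, hmemA x₁ hx₁0 hx₁μ hx₁f⟩
      have hAbdd : BddBelow A := ⟨δ, fun y hy => hy.1.1⟩
      set x₀ : ℝ := sInf A with hx₀_def
      have hx₀A : x₀ ∈ A := hAclosed.csInf_mem hAne hAbdd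
      have hx₀0 : 0 < x₀ := lt_of_lt_of_le hδ0 hx₀A.1.1
      have hx₀μ : x₀ ≤ μ := hx₀A.1.2
      have hx₀f : f x₀ ≤ 0 := hx₀A.2
      have hbefore : ∀ y, 0 < y → y < x₀ → 0 < f y := by
        intro y hy0 hyx
        by_contra hyf
        push_neg at hyf
        have hyA : y ∈ A := hmemA y hy0 (le_trans hyx.le hx₀μ) hyf
        exact absurd (csInf_le hAbdd hyA) (not_le.mpr hyx)
      rcases lt_or_eq_of_le hx₀μ with hlt | heq
      · have hf0' : 0 ≤ f x₀ := by
          have hne : (𝓝[Set.Ioo (0:ℝ) x₀] x₀).NeBot := by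
            rw [nhdsWithin_Ioo_eq_nhdsLT hx₀0]; infer_instance
          have h2 : Tendsto f (𝓝[Set.Ioo (0:ℝ) x₀] x₀) (𝓝 (f x₀)) :=
            (hfc x₀ ⟨hx₀0.le, hx₀μ⟩).mono_left
              (nhdsWithin_mono _ (fun y hy => ⟨hy.1.le, le_trans hy.2.le hx₀μ⟩))
          refine ge_of_tendsto h2 ?_
          filter_upwards [eventually_mem_nhdsWithin] with y hy
          exact (hbefore y hy.1 hy.2).le
        have hfnn : ∀ y, 0 < y → y ≤ x₀ → 0 ≤ f y := by
          intro y hy0 hyx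
          rcases lt_or_eq_of_le hyx with h | h
          · exact (hbefore y hy0 h).le
          · rw [h]; exact hf0'
        have hcore := core x₀ hx₀0 hlt hfnn x₀ hx₀0 (le_refl x₀)
        have hφ := phiF_pos μ p x₀ hμ hp hx₀0
        nlinarith [mul_pos hf'0 hφ]
      · have hall : ∀ x, 0 < x → x < μ → c * phiF μ p x ≤ f x := by
          intro x hx0 hxμ
          exact core x hx0 hxμ
            (fun y hy0 hyx => (hbefore y hy0 (lt_of_le_of_lt hyx (heq ▸ hxμ))).le)
            x hx0 (le_refl x)
        have h := hmulim hall
        have hφ := phiF_pos μ p μ hμ hp hμ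
        have hfμ : f μ ≤ 0 := heq ▸ hx₀f
        nlinarith [mul_pos hf'0 hφ]
    intro x hx0 hxμ
    rcases eq_or_lt_of_le hx0 with h0 | h0
    · rw [← h0, phiF_zero, hf0]
      simp
    rcases lt_or_eq_of_le hxμ with h1 | h1
    · exact core x h0 h1
        (fun y hy0 hyx => (hnoneg y hy0 (le_trans hyx h1.le)).le) x h0 (le_refl x)
    · rw [h1]
      exact hmulim (fun y hy0 hyμ => core y hy0 hyμ
        (fun z hz0 hzy => (hnoneg z hz0 (le_trans hzy hyμ.le)).le) y hy0 (le_refl y))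
  constructor
  · intro x hx hxμ
    have h := hmaster x hx.le hxμ
    have hφ := phiF_pos μ p x hμ hp hx
    nlinarith [mul_pos hf'0 hφ]
  · intro x hx
    have h := hmaster x hx.1 hx.2
    have hlb := phiF_lb μ p x hμ hp hx.1
    have hx0 : 0 ≤ x := hx.1
    have hS : 0 ≤ Real.sinh (p * x) / p := by positivity
    have h2 : c * (1/3 * (Real.sinh (p*x)/p)) ≤ c * phiF μ p x :=
      mul_le_mul_of_nonneg_left hlb hf'0.le
    nlinarith [mul_nonneg hf'0.le hS]
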